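/- Let D, A₀, A₁, …, A_N be square complex n×n matrices with D invertible, and ‖·‖ a submultiplicative matrix norm. If ‖D(A_i − Id)‖ ≤ ε_i for i = 0, …, N, then ‖D(A₀A₁⋯A_N − Id)‖ ≤ ε₀ + (1 + ε₀‖D^{−1}‖)ε₁ + ⋯ + (1 + ε₀‖D^{−1}‖)⋯(1 + ε_{N−1}‖D^{−1}‖)ε_N. -/

import Mathlib

lemma prod_Iio_fin_succ' {M} [CommMonoid M] {m : ℕ} (g : Fin (m+1) → M) (i : Fin m) :
    ∏ j ∈ Finset.Iio (i.succ), g j = g 0 * ∏ j ∈ Finset.Iio i, g j.succ := by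
  rw [show Finset.Iio i.succ = insert (0 : Fin (m+1)) ((Finset.Iio i).map (Fin.succEmb m)) by
    ext j
    cases j using Fin.cases with
    | zero => simp
    | succ k => simp [Fin.succ_lt_succ_iff, Fin.succ_inj, Fin.succ_ne_zero]]
  rw [Finset.prod_insert (by simp [Fin.succ_ne_zero]), Finset.prod_map]
  rfl

lemma stmt_9_aux (n : ℕ) (ν : Matrix (Fin n) (Fin n) ℂ → ℝ)
    (hν0 : ∀ A, 0 ≤ ν A)
    (hνadd : ∀ A B, ν (A + B) ≤ ν A + ν B)
    (hνmul : ∀ A B, ν (A * B) ≤ ν A * ν B)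
    (D : Matrix (Fin n) (Fin n) ℂ) (hD : IsUnit D.det) :
    ∀ N (A : Fin (N + 1) → Matrix (Fin n) (Fin n) ℂ) (ε : Fin (N + 1) → ℝ),
    (∀ i, ν (D * (A i - 1)) ≤ ε i) →
    ν (D * ((List.ofFn A).prod - 1))
      ≤ ∑ i : Fin (N + 1), (∏ j ∈ Finset.Iio i, (1 + ε j * ν D⁻¹)) * ε i := by
  intro N
  induction N with
  | zero =>
    intro A ε hA
    have h0 : Finset.Iio (0 : Fin 1) = ∅ := by ext j; simp [Fin.pos_iff_ne_zero]
    simpa [h0] using hA 0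
  | succ N IH =>
    intro A ε hA
    set P : Matrix (Fin n) (Fin n) ℂ := (List.ofFn (fun i : Fin (N+1) => A i.succ)).prod with hP
    have hIH := IH (fun i => A i.succ) (fun i => ε i.succ) (fun i => hA i.succ)
    have hprod : (List.ofFn A).prod = A 0 * P := by
      rw [List.ofFn_succ]; rfl
    have h1 : D⁻¹ * D = 1 := Matrix.nonsing_inv_mul D hD
    have key : D * ((List.ofFn A).prod - 1)
        = D * (A 0 - 1) + (D * (A 0 - 1) * D⁻¹) * (D * (P - 1)) + D * (P - 1) := by
      rw [hprod, show (D * (A 0 - 1) * D⁻¹) * (D * (P - 1)) = D * (A 0 - 1) * (P - 1) by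
        rw [mul_assoc (D * (A 0 - 1)), ← mul_assoc D⁻¹ D, h1, one_mul]]
      noncomm_ring
    set c := ν D⁻¹ with hc
    set R := ν (D * (P - 1)) with hR
    have hc0 : 0 ≤ c := hν0 _
    have hε0 : 0 ≤ ε 0 := le_trans (hν0 _) (hA 0)
    have hbound : ν (D * ((List.ofFn A).prod - 1)) ≤ ε 0 + (1 + ε 0 * c) * R := by
      rw [key]
      calc ν (D * (A 0 - 1) + (D * (A 0 - 1) * D⁻¹) * (D * (P - 1)) + D * (P - 1))
          ≤ ν (D * (A 0 - 1)) + ν ((D * (A 0 - 1) * D⁻¹) * (D * (P - 1))) + ν (D * (P - 1)) := by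
            refine le_trans (hνadd _ _) (add_le_add_left (hνadd _ _) _)
        _ ≤ ε 0 + (ε 0 * c) * R + R := by
            refine add_le_add (add_le_add (hA 0) ?_) le_rfl
            refine le_trans (hνmul _ _) ?_
            refine mul_le_mul ?_ le_rfl (hν0 _) (by positivity)
            exact le_trans (hνmul _ _) (mul_le_mul_of_nonneg_right (hA 0) hc0)
        _ = ε 0 + (1 + ε 0 * c) * R := by ring
    refine hbound.trans ?_
    have hmono : (1 + ε 0 * c) * R
        ≤ (1 + ε 0 * c) * ∑ i : Fin (N+1),
            (∏ j ∈ Finset.Iio i, (1 + ε j.succ * c)) * ε i.succ :=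
      mul_le_mul_of_nonneg_left hIH (by positivity)
    rw [Fin.sum_univ_succ]
    have h0 : Finset.Iio (0 : Fin (N+2)) = ∅ := by ext j; simp [Fin.pos_iff_ne_zero]
    simp only [h0, Finset.prod_empty, one_mul]
    rw [show ∑ i : Fin (N+1), (∏ j ∈ Finset.Iio i.succ, (1 + ε j * c)) * ε i.succ
        = (1 + ε 0 * c) * ∑ i : Fin (N+1),
            (∏ j ∈ Finset.Iio i, (1 + ε j.succ * c)) * ε i.succ by
      rw [Finset.mul_sum]
      refine Finset.sum_congr rfl fun i _ => ?_
      rw [prod_Iio_fin_succ' (fun j => 1 + ε j * c) i, mul_assoc]]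
    exact add_le_add_right (hmono.trans_eq rfl) _

theorem stmt_9 (n N : ℕ) (ν : Matrix (Fin n) (Fin n) ℂ → ℝ)
    (hν0 : ∀ A, 0 ≤ ν A)
    (hνadd : ∀ A B, ν (A + B) ≤ ν A + ν B)
    (hνmul : ∀ A B, ν (A * B) ≤ ν A * ν B)
    (D : Matrix (Fin n) (Fin n) ℂ) (hD : IsUnit D.det)
    (A : Fin (N + 1) → Matrix (Fin n) (Fin n) ℂ)
    (ε : Fin (N + 1) → ℝ)
    (hA : ∀ i, ν (D * (A i - 1)) ≤ ε i) :
    ν (D * ((List.ofFn A).prod - 1))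
      ≤ ∑ i : Fin (N + 1), (∏ j ∈ Finset.Iio i, (1 + ε j * ν D⁻¹)) * ε i := by
  exact stmt_9_aux n ν hν0 hνadd hνmul D hD N A ε hA
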